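/- Let p be an odd prime, ξ = exp(2πi/p), u an integer with p = 4u + ε, ε = ±1. Then ξ^u + ξ^{-u} is invertible in Z[1/2, ξ]. -/

import Mathlib

open Complex Polynomial Finset

lemma prod_one_add_pow (p : ℕ) (hp : p.Prime) (hodd : Odd p) (ξ : ℂ)
    (hprim : IsPrimitiveRoot ξ p) :
    ∏ i ∈ Finset.range p, (1 + ξ ^ i) = 2 := by
  have hpos : 0 < p := hp.pos
  have hset : Polynomial.nthRootsFinset p (1 : ℂ) = (Finset.range p).image (ξ ^ ·) := by
    ext x
    simp only [Polynomial.mem_nthRootsFinset hpos (1 : ℂ), Finset.mem_image, Finset.mem_range]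
    haveI : NeZero p := ⟨hp.ne_zero⟩
    constructor
    · intro hx
      obtain ⟨i, hi, rfl⟩ := hprim.eq_pow_of_pow_eq_one hx
      exact ⟨i, hi, rfl⟩
    · rintro ⟨i, hi, rfl⟩
      rw [← pow_mul, mul_comm, pow_mul, hprim.pow_eq_one, one_pow]
  have hpoly := Polynomial.X_pow_sub_one_eq_prod hpos hprim
  have heval := congrArg (Polynomial.eval (-1 : ℂ)) hpoly
  simp only [Polynomial.eval_sub, Polynomial.eval_pow, Polynomial.eval_X,
    Polynomial.eval_one, Polynomial.eval_prod, Polynomial.eval_sub,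
    Polynomial.eval_C] at heval
  rw [hset, Finset.prod_image (fun i hi j hj h =>
      hprim.pow_inj (Finset.mem_range.mp hi) (Finset.mem_range.mp hj) h)] at heval
  have hodd' : (-1 : ℂ) ^ p = -1 := hodd.neg_one_pow
  rw [hodd'] at heval
  have hstep : ∏ i ∈ Finset.range p, (-1 - ξ ^ i) =
      (-1) ^ p * ∏ i ∈ Finset.range p, (1 + ξ ^ i) := by
    calc ∏ i ∈ Finset.range p, (-1 - ξ ^ i)
        = ∏ i ∈ Finset.range p, (-1) * (1 + ξ ^ i) := by
          refine Finset.prod_congr rfl fun i _ => by ring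
      _ = (-1) ^ p * ∏ i ∈ Finset.range p, (1 + ξ ^ i) := by
          rw [Finset.prod_mul_distrib, Finset.prod_const, Finset.card_range]
  rw [hstep, hodd'] at heval
  linear_combination heval

/-- `ξ^u + ξ^{-u}` is invertible in `ℤ[1/2, ξ]`. -/
theorem zeta_u_add_inv_unit (p : ℕ) (hp : p.Prime) (hodd : Odd p)
    (u ε : ℤ) (hε : ε = 1 ∨ ε = -1) (hpu : (p : ℤ) = 4 * u + ε)
    (ξ : ℂ) (hξ : ξ = Complex.exp (2 * Real.pi * Complex.I / p)) :
    ∃ c ∈ Subring.closure {(1 / 2 : ℂ), ξ}, (ξ ^ u + ξ ^ (-u)) * c = 1 := by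
  have hprim : IsPrimitiveRoot ξ p := by
    rw [hξ]; exact Complex.isPrimitiveRoot_exp p hp.ne_zero
  have hξ0 : ξ ≠ 0 := hprim.ne_zero hp.ne_zero
  have hppos : (0 : ℤ) < p := by exact_mod_cast hp.pos
  have hξp : ξ ^ (p : ℤ) = 1 := by
    rw [zpow_natCast, hprim.pow_eq_one]
  -- reduction of integer powers mod p
  have hpow : ∀ n : ℤ, ξ ^ n = ξ ^ (n % p).toNat := by
    intro n
    have h1 : n = p * (n / p) + n % p := (Int.mul_ediv_add_emod n p).symm
    have h2 : (0 : ℤ) ≤ n % p := Int.emod_nonneg n (by positivity)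
    calc ξ ^ n = ξ ^ ((p : ℤ) * (n / p) + n % p) := by rw [← h1]
      _ = (ξ ^ (p : ℤ)) ^ (n / p) * ξ ^ (n % p) := by
          rw [zpow_add₀ hξ0, zpow_mul]
      _ = ξ ^ (n % p) := by rw [hξp, one_zpow, one_mul]
      _ = ξ ^ (n % p).toNat := by
          rw [← zpow_natCast, Int.toNat_of_nonneg h2]
  set R := Subring.closure {(1 / 2 : ℂ), ξ} with hR
  have hhalf : (1 / 2 : ℂ) ∈ R := Subring.subset_closure (Set.mem_insert _ _)
  have hξR : ξ ∈ R := Subring.subset_closure (Set.mem_insert_of_mem _ rfl)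
  -- p does not divide 2u
  have hk0 : (2 * u) % p ≠ 0 := by
    intro h
    have hdvd : (p : ℤ) ∣ 2 * u := Int.dvd_of_emod_eq_zero h
    have hdvd4 : (p : ℤ) ∣ 4 * u := by
      obtain ⟨c, hc⟩ := hdvd
      exact ⟨2 * c, by linarith⟩
    have hdvdε : (p : ℤ) ∣ ε := by
      have hεeq : ε = (p : ℤ) - 4 * u := by linarith
      rw [hεeq]; exact dvd_sub dvd_rfl hdvd4
    have hu : IsUnit ((p : ℤ)) :=
      isUnit_of_dvd_unit hdvdε (by rcases hε with h | h <;> simp [h])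
    rw [Int.isUnit_iff] at hu
    have hp2 := hp.two_le
    rcases hu with h | h <;> omega
  have h2nn : (0 : ℤ) ≤ (2 * u) % p := Int.emod_nonneg _ (by positivity)
  have h2lt : (2 * u) % p < p := Int.emod_lt_of_pos _ hppos
  obtain ⟨k, hk⟩ : ∃ k : ℕ, (k : ℤ) = (2 * u) % p :=
    ⟨((2 * u) % p).toNat, Int.toNat_of_nonneg h2nn⟩
  have hklt : k < p := by exact_mod_cast hk ▸ h2lt
  have hkmem : k ∈ Finset.range p := Finset.mem_range.mpr hklt
  have hprod : ∏ i ∈ Finset.range p, (1 + ξ ^ i) = 2 :=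
    prod_one_add_pow p hp hodd ξ hprim
  have hsplit : (1 + ξ ^ k) * ∏ i ∈ (Finset.range p).erase k, (1 + ξ ^ i) = 2 :=
    (Finset.mul_prod_erase _ (fun i => 1 + ξ ^ i) hkmem).trans hprod
  refine ⟨ξ ^ (u % p).toNat * ((1 / 2) *
      ∏ i ∈ (Finset.range p).erase k, (1 + ξ ^ i)), ?_, ?_⟩
  · exact R.mul_mem (R.pow_mem hξR _)
      (R.mul_mem hhalf (R.prod_mem fun i _ => R.add_mem R.one_mem (R.pow_mem hξR i)))
  · have hmu : ξ ^ ((u % p).toNat : ℕ) = ξ ^ u := (hpow u).symm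
    have hku : ξ ^ (k : ℕ) = ξ ^ (2 * u) := by
      have : ((2 * u) % (p : ℤ)).toNat = k := by omega
      rw [← this]; exact (hpow (2 * u)).symm
    have key : ξ ^ u + ξ ^ (-u) = ξ ^ (-u) * (1 + ξ ^ k) := by
      rw [hku, mul_add, mul_one, ← zpow_add₀ hξ0]
      ring_nf
    rw [key, hmu]
    have hre : ξ ^ (-u) * (1 + ξ ^ k) *
        (ξ ^ u * (1 / 2 * ∏ i ∈ (Finset.range p).erase k, (1 + ξ ^ i)))
        = (ξ ^ (-u) * ξ ^ u) * (1 / 2) *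
          ((1 + ξ ^ k) * ∏ i ∈ (Finset.range p).erase k, (1 + ξ ^ i)) := by
      ring
    rw [hre, hsplit, ← zpow_add₀ hξ0]
    norm_num
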